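/- On the Grassmannian of m-dimensional linear subspaces of ℝⁿ, the function ρ(P, Q) := sup_{a ∈ P, |a|=1} inf_{b ∈ Q} |a - b| is symmetric: ρ(P, Q) = ρ(Q, P) for all m-dimensional subspaces P, Q. -/

import Mathlib

open Metric Module ContinuousLinearMap RealInnerProductSpace



/-- The (asymmetric) gap `ρ(P,Q) = sup_{a ∈ P, ‖a‖=1} dist(a, Q)` between linear
subspaces of euclidean space. -/
noncomputable def rho {n : ℕ}
    (P Q : Submodule ℝ (EuclideanSpace ℝ (Fin n))) : ℝ :=
  sSup {d : ℝ | ∃ a ∈ P, ‖a‖ = 1 ∧ d = Metric.infDist a (Q : Set (EuclideanSpace ℝ (Fin n)))}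

open Metric Module ContinuousLinearMap RealInnerProductSpace

variable {E F : Type*} [NormedAddCommGroup E] [InnerProductSpace ℝ E]
  [NormedAddCommGroup F] [InnerProductSpace ℝ F]
  [FiniteDimensional ℝ E] [FiniteDimensional ℝ F]

lemma aux_le (hd : finrank ℝ E = finrank ℝ F) (hE : 0 < finrank ℝ E) (S : E →L[ℝ] F) :
    sInf ((fun x => ‖S x‖) '' sphere (0:E) 1) ≤
      sInf ((fun y => ‖adjoint S y‖) '' sphere (0:F) 1) := by
  have hntE : Nontrivial E := Module.nontrivial_of_finrank_pos hE
  have hntF : Nontrivial F := Module.nontrivial_of_finrank_pos (hd ▸ hE)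
  have hsE : (sphere (0:E) 1).Nonempty := NormedSpace.sphere_nonempty.mpr zero_le_one
  have hsF : (sphere (0:F) 1).Nonempty := NormedSpace.sphere_nonempty.mpr zero_le_one
  obtain ⟨x₀, hx₀, hmin⟩ := (isCompact_sphere (0:E) 1).exists_isMinOn (f := fun x => ‖S x‖)
    hsE ((continuous_norm.comp S.continuous).continuousOn)
  have hc1 : sInf ((fun x => ‖S x‖) '' sphere (0:E) 1) = ‖S x₀‖ := by
    refine IsLeast.csInf_eq ⟨⟨x₀, hx₀, rfl⟩, ?_⟩
    rintro b ⟨y, hy, rfl⟩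
    exact hmin hy
  rw [hc1]
  set c := ‖S x₀‖ with hc
  have hx₀n : ‖x₀‖ = 1 := mem_sphere_zero_iff_norm.mp hx₀
  have hlow : ∀ x : E, c * ‖x‖ ≤ ‖S x‖ := by
    intro x
    rcases eq_or_ne x 0 with rfl | hx
    · simp
    · have hxn : ‖x‖ ≠ 0 := norm_ne_zero_iff.mpr hx
      have hmem : (‖x‖⁻¹ • x) ∈ sphere (0:E) 1 := by
        simp [norm_smul, inv_mul_cancel₀ hxn]
      have h5 : c ≤ ‖x‖⁻¹ * ‖S x‖ := by
        simpa [norm_smul] using hmin hmem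
      calc c * ‖x‖ ≤ (‖x‖⁻¹ * ‖S x‖) * ‖x‖ := by
            apply mul_le_mul_of_nonneg_right h5 (norm_nonneg _)
        _ = ‖S x‖ := by field_simp
  refine le_csInf (hsF.image _) ?_
  rintro b ⟨y, hy, rfl⟩
  have hyn : ‖y‖ = 1 := mem_sphere_zero_iff_norm.mp hy
  rcases eq_or_lt_of_le (norm_nonneg (S x₀)) with h0 | hcpos
  · rw [← hc] at h0; rw [← h0]; exact norm_nonneg _
  · rw [← hc] at hcpos
    have hinj : Function.Injective S := by
      intro a b hab
      have h1 := hlow (a - b)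
      rw [map_sub, hab, sub_self, norm_zero] at h1
      have : ‖a - b‖ = 0 := le_antisymm (by nlinarith [norm_nonneg (a-b)]) (norm_nonneg _)
      exact sub_eq_zero.mp (norm_eq_zero.mp this)
    have hsurj : Function.Surjective S := by
      have h1 : LinearMap.range (S : E →ₗ[ℝ] F) = ⊤ := by
        apply Submodule.eq_top_of_finrank_eq
        rw [LinearMap.finrank_range_of_inj hinj, hd]
      intro y
      obtain ⟨x, hx⟩ := LinearMap.range_eq_top.mp h1 y
      exact ⟨x, hx⟩
    obtain ⟨x, rfl⟩ := hsurj y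
    have h1 : (1:ℝ) = ⟪adjoint S (S x), x⟫ := by
      rw [adjoint_inner_left, real_inner_self_eq_norm_sq, hyn]; norm_num
    have h2 : ⟪adjoint S (S x), x⟫ ≤ ‖adjoint S (S x)‖ * ‖x‖ := real_inner_le_norm _ _
    have h3 : c * ‖x‖ ≤ ‖S x‖ := hlow x
    have h4 : ‖S x‖ = 1 := hyn
    nlinarith [norm_nonneg (adjoint S (S x)), norm_nonneg x]

lemma aux_eq (hd : finrank ℝ E = finrank ℝ F) (hE : 0 < finrank ℝ E) (S : E →L[ℝ] F) :
    sInf ((fun x => ‖S x‖) '' sphere (0:E) 1) =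
      sInf ((fun y => ‖adjoint S y‖) '' sphere (0:F) 1) := by
  refine le_antisymm (aux_le hd hE S) ?_
  have := aux_le hd.symm (hd ▸ hE) (adjoint S)
  rwa [adjoint_adjoint] at this

open Metric Module ContinuousLinearMap RealInnerProductSpace

lemma infDist_eq_norm_sub {n : ℕ} (Q : Submodule ℝ (EuclideanSpace ℝ (Fin n)))
    (a : EuclideanSpace ℝ (Fin n)) :
    Metric.infDist a (Q : Set (EuclideanSpace ℝ (Fin n)))
      = ‖a - (Submodule.orthogonalProjectionOnto Q a : EuclideanSpace ℝ (Fin n))‖ := by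
  rw [Metric.infDist_eq_iInf, ← Submodule.starProjection_apply, Submodule.starProjection_minimal]
  exact iInf_congr fun y => by rw [dist_eq_norm]

lemma infDist_eq_sqrt {n : ℕ} (Q : Submodule ℝ (EuclideanSpace ℝ (Fin n)))
    (a : EuclideanSpace ℝ (Fin n)) (ha : ‖a‖ = 1) :
    Metric.infDist a (Q : Set (EuclideanSpace ℝ (Fin n)))
      = Real.sqrt (1 - ‖(Submodule.orthogonalProjectionOnto Q a : EuclideanSpace ℝ (Fin n))‖ ^ 2) := by
  rw [infDist_eq_norm_sub]
  have hpyth := Submodule.norm_sq_eq_add_norm_sq_projection a Q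
  have horth : ‖(Submodule.orthogonalProjectionOnto Qᗮ a : EuclideanSpace ℝ (Fin n))‖
      = ‖a - (Submodule.orthogonalProjectionOnto Q a : EuclideanSpace ℝ (Fin n))‖ := by
    rw [← Submodule.starProjection_apply, Submodule.starProjection_orthogonal_val, Submodule.starProjection_apply]
  rw [← Real.sqrt_sq (norm_nonneg (a - _))]
  congr 1
  have h1 : ‖(Submodule.orthogonalProjectionOnto Q a : EuclideanSpace ℝ (Fin n))‖ = ‖Submodule.orthogonalProjectionOnto Q a‖ := rfl
  have h2 : ‖(Submodule.orthogonalProjectionOnto Qᗮ a : EuclideanSpace ℝ (Fin n))‖ = ‖Submodule.orthogonalProjectionOnto Qᗮ a‖ := rfl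
  rw [h1]
  have h3 : ‖a - (Submodule.orthogonalProjectionOnto Q a : EuclideanSpace ℝ (Fin n))‖ ^ 2
      = ‖Submodule.orthogonalProjectionOnto Qᗮ a‖ ^ 2 := by rw [← h2, horth]
  have h4 : ‖a‖ ^ 2 = (1:ℝ) := by rw [ha]; norm_num
  linarith

lemma rho_eq_sqrt {n : ℕ} (P Q : Submodule ℝ (EuclideanSpace ℝ (Fin n)))
    (hP : 0 < finrank ℝ P) :
    rho P Q = Real.sqrt (1 -
      (sInf ((fun x : P => ‖((Submodule.orthogonalProjectionOnto Q).comp P.subtypeL) x‖) '' sphere (0:P) 1)) ^ 2) := by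
  set S := (Submodule.orthogonalProjectionOnto Q).comp P.subtypeL with hS
  have hntP : Nontrivial P := Module.nontrivial_of_finrank_pos hP
  have hsP : (sphere (0:P) 1).Nonempty := NormedSpace.sphere_nonempty.mpr zero_le_one
  obtain ⟨x₀, hx₀, hmin⟩ := (isCompact_sphere (0:P) 1).exists_isMinOn (f := fun x => ‖S x‖)
    hsP ((continuous_norm.comp S.continuous).continuousOn)
  have hc1 : sInf ((fun x : P => ‖S x‖) '' sphere (0:P) 1) = ‖S x₀‖ := by
    refine IsLeast.csInf_eq ⟨⟨x₀, hx₀, rfl⟩, ?_⟩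
    rintro b ⟨y, hy, rfl⟩
    exact hmin hy
  rw [hc1]
  have hSnorm : ∀ x : P, ‖S x‖ = ‖(Submodule.orthogonalProjectionOnto Q (x : EuclideanSpace ℝ (Fin n)) :
      EuclideanSpace ℝ (Fin n))‖ := fun x => rfl
  have hcoenorm : ∀ x : P, ‖(x : EuclideanSpace ℝ (Fin n))‖ = ‖x‖ := fun x => rfl
  have hset : {d : ℝ | ∃ a ∈ P, ‖a‖ = 1 ∧ d = Metric.infDist a (Q : Set (EuclideanSpace ℝ (Fin n)))}
      = (fun x : P => Real.sqrt (1 - ‖S x‖ ^ 2)) '' sphere (0:P) 1 := by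
    ext d
    constructor
    · rintro ⟨a, haP, han, rfl⟩
      refine ⟨⟨a, haP⟩, ?_, ?_⟩
      · rw [mem_sphere_zero_iff_norm]; exact han
      · simp only [hSnorm]
        exact (infDist_eq_sqrt Q a han).symm
    · rintro ⟨x, hx, rfl⟩
      refine ⟨(x : EuclideanSpace ℝ (Fin n)), x.2, ?_, ?_⟩
      · rw [hcoenorm]; exact mem_sphere_zero_iff_norm.mp hx
      · simp only [hSnorm]
        exact (infDist_eq_sqrt Q _ (by rw [hcoenorm]; exact mem_sphere_zero_iff_norm.mp hx)).symm
  rw [rho, hset]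
  refine IsGreatest.csSup_eq ⟨⟨x₀, hx₀, rfl⟩, ?_⟩
  rintro b ⟨y, hy, rfl⟩
  apply Real.sqrt_le_sqrt
  have h1 : ‖S x₀‖ ≤ ‖S y‖ := hmin hy
  nlinarith [norm_nonneg (S x₀), norm_nonneg (S y)]

/-- `ρ` is symmetric on the Grassmannian of `m`-dimensional subspaces. -/
theorem stmt9 {n m : ℕ}
    (P Q : Submodule ℝ (EuclideanSpace ℝ (Fin n)))
    (hP : Module.finrank ℝ P = m) (hQ : Module.finrank ℝ Q = m) :
    rho P Q = rho Q P := by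
  rcases Nat.eq_zero_or_pos m with rfl | hm
  · have h1 : P = ⊥ := Submodule.finrank_eq_zero.mp hP
    have h2 : Q = ⊥ := Submodule.finrank_eq_zero.mp hQ
    rw [h1, h2]
  · have hP' : 0 < finrank ℝ P := hP ▸ hm
    have hQ' : 0 < finrank ℝ Q := hQ ▸ hm
    rw [rho_eq_sqrt P Q hP', rho_eq_sqrt Q P hQ']
    have hadj : adjoint ((Submodule.orthogonalProjectionOnto Q).comp P.subtypeL)
        = (Submodule.orthogonalProjectionOnto P).comp Q.subtypeL := by
      rw [adjoint_comp, Submodule.adjoint_orthogonalProjection, Submodule.adjoint_subtypeL]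
    have key := aux_eq (E := P) (F := Q) (hP.trans hQ.symm)
      hP' ((Submodule.orthogonalProjectionOnto Q).comp P.subtypeL)
    rw [hadj] at key
    rw [key]
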